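/- Pointwise limit relating Jacobi–Piñeiro and Laguerre type I polynomials: with P^{(i)}_{n⃗}(·; α₁,…,α_p, β) and L^{(i)}_{n⃗}(·; α₁,…,α_p) the polynomials defined by the hypergeometric expressions of the paper, for every x ∈ ℝ, lim_{β→∞} \frac{Γ(β+|n⃗|)}{\prod_{k=1}^p (α_k+β+|n⃗|)_{n_k} Γ(α_i+β+|n⃗|)} P^{(i)}_{n⃗}(x/β; α₁,…,α_p, β) = L^{(i)}_{n⃗}(x; α₁,…,α_p). -/
import Mathlib


/-- Pochhammer symbol `(x)ₙ` on `ℝ`. -/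
noncomputable def poch (x : ℝ) (n : ℕ) : ℝ := ∏ s ∈ Finset.range n, (x + s)

/-- The `i`-th type I Jacobi–Piñeiro polynomial for `p` weights. -/
noncomputable def JP (p : ℕ) (α : Fin p → ℝ) (β : ℝ) (n : Fin p → ℕ) (i : Fin p)
    (x : ℝ) : ℝ :=
  (-1) ^ ((∑ k, n k) - 1) *
    ((∏ k, poch (α k + β + (∑ k, n k : ℕ)) (n k)) /
      (((n i - 1).factorial : ℝ) *
        ∏ k ∈ Finset.univ.erase i, poch (α k - α i) (n k))) *
    (Real.Gamma (α i + β + (∑ k, n k : ℕ)) /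
      (Real.Gamma (β + (∑ k, n k : ℕ)) * Real.Gamma (α i + 1))) *
    ∑ l ∈ Finset.range (n i),
      poch (-(n i : ℝ) + 1) l * poch (α i + β + (∑ k, n k : ℕ)) l *
          (∏ k ∈ Finset.univ.erase i, poch (α i + 1 - α k - n k) l) /
          (poch (α i + 1) l *
            (∏ k ∈ Finset.univ.erase i, poch (α i + 1 - α k) l) * (l.factorial : ℝ)) *
        x ^ l

/-- The `i`-th type I Laguerre polynomial of the first kind for `p` weights. -/
noncomputable def Lag (p : ℕ) (α : Fin p → ℝ) (n : Fin p → ℕ) (i : Fin p) (x : ℝ) : ℝ :=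
  (-1) ^ ((∑ k, n k) - 1) *
    (1 / (((n i - 1).factorial : ℝ) *
      (∏ k ∈ Finset.univ.erase i, poch (α k - α i) (n k)) * Real.Gamma (α i + 1))) *
    ∑ l ∈ Finset.range (n i),
      poch (-(n i : ℝ) + 1) l *
          (∏ k ∈ Finset.univ.erase i, poch (α i + 1 - α k - n k) l) /
          (poch (α i + 1) l *
            (∏ k ∈ Finset.univ.erase i, poch (α i + 1 - α k) l) * (l.factorial : ℝ)) *
        x ^ l

lemma poch_pos {x : ℝ} (hx : 0 < x) (n : ℕ) : 0 < poch x n := by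
  unfold poch
  exact Finset.prod_pos fun s _ => by positivity

lemma key_lim (c d x : ℝ) (l : ℕ) :
    Filter.Tendsto (fun β : ℝ => poch (c + β + d) l * (x / β) ^ l) Filter.atTop
      (nhds (x ^ l)) := by
  have heq : ∀ β : ℝ, poch (c + β + d) l * (x / β) ^ l
      = ∏ s ∈ Finset.range l, ((c + β + d + s) * (x / β)) := by
    intro β
    rw [Finset.prod_mul_distrib, Finset.prod_const, Finset.card_range]
    rfl
  simp only [heq]
  have hx : x ^ l = ∏ _s ∈ Finset.range l, x := by
    rw [Finset.prod_const, Finset.card_range]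
  rw [hx]
  refine tendsto_finset_prod _ fun s _ => ?_
  have h0 : Filter.Tendsto (fun β : ℝ => (c + d + s) * x * β⁻¹ + x) Filter.atTop (nhds x) := by
    have := (tendsto_inv_atTop_zero.const_mul ((c + d + (s : ℝ)) * x)).add_const x
    simpa using this
  refine h0.congr' ?_
  filter_upwards [Filter.eventually_ge_atTop 1] with β hβ
  have hβ0 : β ≠ 0 := by positivity
  field_simp
  ring

lemma aux_cancel (s S F D G1 G2 G3 P : ℝ) (h1 : G1 ≠ 0) (h2 : G2 ≠ 0) (hP : P ≠ 0) :
    G1 / (P * G2) * (s * (P / (F * D)) * (G2 / (G1 * G3)) * S)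
      = s * (1 / (F * D * G3)) * S := by
  have e : G1 / (P * G2) * (s * (P / (F * D)) * (G2 / (G1 * G3)) * S)
      = (G1 * G1⁻¹) * (P * P⁻¹) * (G2 * G2⁻¹) * (s * (1 / (F * D * G3)) * S) := by
    simp only [div_eq_mul_inv, mul_inv, one_mul]
    ring
  rw [e, mul_inv_cancel₀ h1, mul_inv_cancel₀ hP, mul_inv_cancel₀ h2]
  ring

set_option maxHeartbeats 2000000 in
/-- Pointwise limit relating the type I Jacobi–Piñeiro polynomials to the type I
Laguerre polynomials of the first kind, as `β → ∞`. -/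
theorem laguerre_limit_of_jacobiPineiro (p : ℕ) (α : Fin p → ℝ) (hα : ∀ k, -1 < α k)
    (hZ : ∀ k k', k ≠ k' → ∀ z : ℤ, α k - α k' ≠ (z : ℝ))
    (n : Fin p → ℕ) (hn : ∀ k, 1 ≤ n k) (i : Fin p) (x : ℝ) :
    Filter.Tendsto
      (fun β : ℝ =>
        Real.Gamma (β + (∑ k, n k : ℕ)) /
            ((∏ k, poch (α k + β + (∑ k, n k : ℕ)) (n k)) *
              Real.Gamma (α i + β + (∑ k, n k : ℕ))) *
          JP p α β n i (x / β))
      Filter.atTop (nhds (Lag p α n i x)) := by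
  have hfac : (((n i - 1).factorial : ℕ) : ℝ) ≠ 0 :=
    Nat.cast_ne_zero.mpr (Nat.factorial_ne_zero _)
  have hΓi : Real.Gamma (α i + 1) ≠ 0 :=
    (Real.Gamma_pos_of_pos (by have := hα i; linarith)).ne'
  have hDprod : (∏ k ∈ Finset.univ.erase i, poch (α k - α i) (n k)) ≠ 0 := by
    rw [Finset.prod_ne_zero_iff]
    intro k hk
    unfold poch
    rw [Finset.prod_ne_zero_iff]
    intro s _ h
    exact hZ k i (Finset.ne_of_mem_erase hk) (-(s : ℤ)) (by push_cast; linarith)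
  have hg : Filter.Tendsto
      (fun β : ℝ =>
        (-1 : ℝ) ^ ((∑ k, n k) - 1) *
          (1 / (((n i - 1).factorial : ℝ) *
            (∏ k ∈ Finset.univ.erase i, poch (α k - α i) (n k)) * Real.Gamma (α i + 1))) *
          ∑ l ∈ Finset.range (n i),
            poch (-(n i : ℝ) + 1) l * poch (α i + β + (∑ k, n k : ℕ)) l *
                (∏ k ∈ Finset.univ.erase i, poch (α i + 1 - α k - n k) l) /
                (poch (α i + 1) l *
                  (∏ k ∈ Finset.univ.erase i, poch (α i + 1 - α k) l) * (l.factorial : ℝ)) *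
              (x / β) ^ l)
      Filter.atTop (nhds (Lag p α n i x)) := by
    unfold Lag
    refine Filter.Tendsto.const_mul _ ?_
    refine tendsto_finset_sum _ fun l _ => ?_
    refine Filter.Tendsto.congr (f₁ := fun β : ℝ =>
        (poch (-(n i : ℝ) + 1) l *
          (∏ k ∈ Finset.univ.erase i, poch (α i + 1 - α k - n k) l) /
          (poch (α i + 1) l *
            (∏ k ∈ Finset.univ.erase i, poch (α i + 1 - α k) l) * (l.factorial : ℝ))) *
        (poch (α i + β + (∑ k, n k : ℕ)) l * (x / β) ^ l)) (fun β => by ring) ?_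
    exact Filter.Tendsto.const_mul _ (key_lim (α i) ((∑ k, n k : ℕ) : ℝ) x l)
  refine Filter.Tendsto.congr' ?_ hg
  filter_upwards [Filter.eventually_ge_atTop 1] with β hβ
  have hβ0 : (0 : ℝ) < β := by linarith
  have hNnn : (0 : ℝ) ≤ ((∑ k, n k : ℕ) : ℝ) := Nat.cast_nonneg _
  have hΓ1 : Real.Gamma (β + (∑ k, n k : ℕ)) ≠ 0 :=
    (Real.Gamma_pos_of_pos (by linarith)).ne'
  have hΓ2 : Real.Gamma (α i + β + (∑ k, n k : ℕ)) ≠ 0 :=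
    (Real.Gamma_pos_of_pos (by have := hα i; linarith)).ne'
  have hPi : (∏ k, poch (α k + β + ((∑ k, n k : ℕ) : ℝ)) (n k)) ≠ 0 := by
    refine ne_of_gt (Finset.prod_pos fun k _ => poch_pos ?_ _)
    have := hα k; linarith
  simp only [JP]
  exact (aux_cancel _ _ _ _ _ _ _ _ hΓ1 hΓ2 hPi).symm
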